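/- A pure state is determined among all PSD matrices by its diagonal and first off-diagonal (the core of the proof that the five Gell-Mann bases and the PSI POVM are rank-1 strictly-complete): Let d ≥ 1 and let ψ ∈ ℂ^d satisfy ψ_j ≠ 0 for every index j with 1 ≤ j ≤ d−2. If σ is a PSD d×d matrix with σ_{jj} = |ψ_j|² for all j = 0, …, d−1 and σ_{j,j+1} = ψ_j · conj(ψ_{j+1}) for all j = 0, …, d−2, then σ = ψψ†. -/

import Mathlib

open Matrix
open scoped ComplexOrder

/-- The rank-one (outer-product) matrix `ψψ†`, with entries `ψ_j · conj(ψ_k)`. -/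
noncomputable def outerProd {n : Type*} (ψ : n → ℂ) : Matrix n n ℂ :=
  Matrix.of fun j k => ψ j * star (ψ k)

/-- **A pure state is determined among all PSD matrices by its diagonal and first
off-diagonal.** Let `ψ ∈ ℂ^d` (d ≥ 1) with `ψ_j ≠ 0` for all `1 ≤ j ≤ d−2`. If `σ` is PSD
with `σ_{jj} = |ψ_j|²` for all `j` and `σ_{j,j+1} = ψ_j conj(ψ_{j+1})` for `j = 0,…,d−2`,
then `σ = ψψ†`. -/
theorem pure_state_from_tridiagonal (d : ℕ) (hd : 1 ≤ d) (ψ : Fin d → ℂ)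
    (hψ : ∀ j : ℕ, ∀ _h1 : 1 ≤ j, ∀ _h2 : j ≤ d - 2, ψ ⟨j, by omega⟩ ≠ 0)
    (σ : Matrix (Fin d) (Fin d) ℂ) (hσ : σ.PosSemidef)
    (hdiag : ∀ j : Fin d, σ j j = (‖ψ j‖ ^ 2 : ℝ))
    (hoff : ∀ j : ℕ, (h : j + 1 < d) →
      σ ⟨j, by omega⟩ ⟨j + 1, h⟩ = ψ ⟨j, by omega⟩ * star (ψ ⟨j + 1, h⟩)) :
    σ = outerProd ψ := by
  obtain ⟨B, hB⟩ : ∃ B : Matrix (Fin d) (Fin d) ℂ, σ = Bᴴ * B := by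
    open scoped MatrixOrder in
    obtain ⟨B, hB⟩ := CStarAlgebra.nonneg_iff_eq_star_mul_self.mp hσ.nonneg
    exact ⟨B, hB⟩
  set c : Fin d → EuclideanSpace ℂ (Fin d) := fun j => WithLp.toLp 2 (fun i => B i j) with hc
  have hinner : ∀ j k : Fin d, (inner ℂ (c j) (c k) : ℂ) = σ j k := by
    intro j k
    rw [hB]
    simp [hc, Matrix.mul_apply, PiLp.inner_apply, Matrix.conjTranspose_apply, mul_comm]
  have hnorm : ∀ j : Fin d, ‖c j‖ = ‖ψ j‖ := by
    intro j
    have h1 : (inner ℂ (c j) (c j) : ℂ) = (‖ψ j‖ ^ 2 : ℝ) := by rw [hinner]; exact hdiag j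
    have h3 : (‖c j‖ : ℝ) ^ 2 = (‖ψ j‖ : ℝ) ^ 2 := by
      have h2 := inner_self_eq_norm_sq (𝕜 := ℂ) (c j)
      rw [h1] at h2
      rw [← h2]
      exact RCLike.ofReal_re _
    nlinarith [norm_nonneg (c j), norm_nonneg (ψ j)]
  have hzero : ∀ j : Fin d, ψ j = 0 → c j = 0 := by
    intro j hj
    have := hnorm j
    rw [hj, norm_zero] at this
    exact norm_eq_zero.mp this
  have hsq : ∀ j : Fin d, σ j j = ψ j * star (ψ j) := by
    intro j
    rw [hdiag j]
    simp [Complex.mul_conj, Complex.normSq_eq_norm_sq]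
  have key : ∀ n : ℕ, ∀ j k : Fin d, (j : ℕ) + n = (k : ℕ) →
      σ j k = ψ j * star (ψ k) := by
    intro n
    induction n using Nat.strong_induction_on with
    | _ n ih =>
      rcases n with _ | _ | n
      · intro j k hjk
        have : j = k := Fin.ext (by omega)
        subst this
        exact hsq j
      · intro j k hjk
        have hk : (j : ℕ) + 1 < d := by omega
        have h := hoff (j : ℕ) hk
        have e1 : (⟨(j : ℕ), by omega⟩ : Fin d) = j := rfl
        have e2 : (⟨(j : ℕ) + 1, hk⟩ : Fin d) = k := by
          apply Fin.ext
          simp only [Fin.val_mk]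
          omega
        rw [e1, e2] at h
        exact h
      · intro j k hjk
        have hmlt : (j : ℕ) + 1 < d := by omega
        set m : Fin d := ⟨(j : ℕ) + 1, hmlt⟩ with hm
        have hψm : ψ m ≠ 0 := hψ ((j : ℕ) + 1) (by omega) (by omega)
        have hσjm : σ j m = ψ j * star (ψ m) := by
          have := hoff (j : ℕ) hmlt
          convert this using 2
        have hσmk : σ m k = ψ m * star (ψ k) :=
          ih (n + 1) (by omega) m k (by simp only [hm, Fin.val_mk]; omega)
        by_cases hψj : ψ j = 0
        · rw [← hinner, hzero j hψj, inner_zero_left, hψj, zero_mul]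
        · have hcj : c j ≠ 0 := fun h => hψj (norm_eq_zero.mp (by rw [← hnorm j, h, norm_zero]))
          have hcm : c m ≠ 0 := fun h => hψm (norm_eq_zero.mp (by rw [← hnorm m, h, norm_zero]))
          have heq : ‖(inner ℂ (c j) (c m) : ℂ)‖ = ‖c j‖ * ‖c m‖ := by
            rw [hinner, hσjm, hnorm, hnorm, norm_mul, norm_star]
          obtain ⟨r, hr0, hr⟩ := (norm_inner_eq_norm_iff hcj hcm).mp heq
          -- c m = r • c j
          have hrval : ψ j * (r * star (ψ j)) = ψ j * star (ψ m) := by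
            have h0 : (inner ℂ (c j) (c m) : ℂ) = r * (inner ℂ (c j) (c j) : ℂ) := by
              rw [hr, inner_smul_right]
            rw [hinner, hinner, hσjm, hsq j] at h0
            linear_combination -h0
          have hr2 : r * star (ψ j) = star (ψ m) := mul_left_cancel₀ hψj hrval
          have hr3 : star r * ψ j = ψ m := by
            have := congrArg star hr2
            simpa using this
          have h1 : σ m k = star r * σ j k := by
            rw [← hinner, ← hinner, hr, inner_smul_left]
            rfl
          rw [hσmk, ← hr3] at h1
          have hrs : (star r : ℂ) ≠ 0 := star_ne_zero.mpr hr0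
          have h2 : star r * (ψ j * star (ψ k)) = star r * σ j k := by rw [← h1]; ring
          exact (mul_left_cancel₀ hrs h2).symm
  ext j k
  rcases le_or_gt (j : ℕ) (k : ℕ) with h | h
  · exact key ((k : ℕ) - (j : ℕ)) j k (by omega)
  · have hkj : σ k j = ψ k * star (ψ j) := key ((j : ℕ) - (k : ℕ)) k j (by omega)
    have hherm : σ j k = star (σ k j) := by
      conv_lhs => rw [← hσ.1]
      rfl
    rw [hherm, hkj]
    simp [outerProd, mul_comm]
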